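/- For a Tychonoff space X, X is projectively Hurewicz if and only if for every continuous map f : X → ℝ^ω, the image f(X) is a Hurewicz space. -/

import Mathlib

open Set Filter Topology

/-- A family is a γ-cover: it is infinite and every point belongs to all but
finitely many members. -/
def IsGammaCover {X : Type*} (𝒰 : Set (Set X)) : Prop :=
  𝒰.Infinite ∧ ∀ x : X, {V ∈ 𝒰 | x ∉ V}.Finite

/-- The Hurewicz property `U_fin(𝒪, Γ)`. -/
def Hurewicz (Y : Type*) [TopologicalSpace Y] : Prop :=
  ∀ 𝒰 : ℕ → Set (Set Y),
    (∀ n, (∀ V ∈ 𝒰 n, IsOpen V) ∧ ⋃₀ 𝒰 n = Set.univ) →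
    ∃ 𝒱 : ℕ → Set (Set Y), (∀ n, 𝒱 n ⊆ 𝒰 n ∧ (𝒱 n).Finite) ∧
      ∀ y : Y, ∀ᶠ n in Filter.atTop, y ∈ ⋃₀ 𝒱 n

/-- A space is projectively Hurewicz if every separable metrizable continuous
image of it is Hurewicz. -/
def ProjHurewicz (X : Type*) [TopologicalSpace X] : Prop :=
  ∀ (Y : Type) [TopologicalSpace Y],
    TopologicalSpace.MetrizableSpace Y → TopologicalSpace.SeparableSpace Y →
    ∀ f : X → Y, Continuous f → Function.Surjective f → Hurewicz Y

/-- A zero-set: the preimage of `{0}` of a continuous real-valued function. -/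
def IsZeroSet {X : Type*} [TopologicalSpace X] (F : Set X) : Prop :=
  ∃ f : X → ℝ, Continuous f ∧ F = f ⁻¹' {0}

/-- A cozero set: the complement of a zero-set. -/
def IsCozero {X : Type*} [TopologicalSpace X] (U : Set X) : Prop :=
  ∃ f : X → ℝ, Continuous f ∧ U = f ⁻¹' {0}ᶜ

/-- A (countable) cozero γ-cover which is γ_F-shrinkable: it admits a
γ-cover by zero-sets shrinking it. -/
def GammaFShrinkable {X : Type*} [TopologicalSpace X] (𝒰 : Set (Set X)) : Prop :=
  𝒰.Countable ∧ (∀ V ∈ 𝒰, IsCozero V) ∧ IsGammaCover 𝒰 ∧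
    ∃ F : Set X → Set X, (∀ V ∈ 𝒰, IsZeroSet (F V) ∧ F V ⊆ V) ∧
      (F '' 𝒰).Infinite ∧ ∀ x : X, {V ∈ 𝒰 | x ∉ F V}.Finite

/-- An ω-groupable open cover: an open cover admitting a partition into finite
parts such that every finite set is contained in a member of all but finitely
many parts. -/
def OmegaGroupable {X : Type*} [TopologicalSpace X] (𝒲 : Set (Set X)) : Prop :=
  (∀ V ∈ 𝒲, IsOpen V) ∧ ⋃₀ 𝒲 = Set.univ ∧
    ∃ P : ℕ → Set (Set X), (∀ n, (P n).Finite ∧ (P n).Nonempty) ∧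
      (⋃ n, P n) = 𝒲 ∧ (∀ m n, m ≠ n → Disjoint (P m) (P n)) ∧
      ∀ F : Set X, F.Finite → ∀ᶠ n in Filter.atTop, ∃ U ∈ P n, F ⊆ U

/-- `C_p(X)`: continuous real-valued functions with the topology of pointwise
convergence (subspace of the product `X → ℝ`). -/
abbrev Cp (X : Type*) [TopologicalSpace X] : Type _ :=
  {f : X → ℝ // Continuous f}

/-- The constant zero function in `C_p(X)`. -/
def zeroCp (X : Type*) [TopologicalSpace X] : Cp X :=
  ⟨fun _ => 0, continuous_const⟩

/-- `A ∈ Γ_g`: `A` is infinite, `g ∉ A` and `A` converges to `g`. -/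
def GammaAt {X : Type*} [TopologicalSpace X] (g : Cp X) (A : Set (Cp X)) : Prop :=
  A.Infinite ∧ g ∉ A ∧ ∀ W ∈ 𝓝 g, (A \ W).Finite

/-- `B ∈ wΓ_g`: `B` admits a partition into finite parts weakly converging
to `g`. -/
def WGammaAt {X : Type*} [TopologicalSpace X] (g : Cp X) (B : Set (Cp X)) : Prop :=
  ∃ S : ℕ → Set (Cp X), (∀ n, (S n).Finite ∧ (S n).Nonempty) ∧
    (⋃ n, S n) = B ∧ (∀ m n, m ≠ n → Disjoint (S m) (S n)) ∧
    ∀ W ∈ 𝓝 g, ∃ s : ℕ → Cp X, (∀ n, s n ∈ S n) ∧ ∀ᶠ n in Filter.atTop, s n ∈ W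

/-- The selection principle `S_fin(Γ_g, wΓ_g)` for `C_p(X)` at the point `g`. -/
def SfinGammaWGamma {X : Type*} [TopologicalSpace X] (g : Cp X) : Prop :=
  ∀ A : ℕ → Set (Cp X), (∀ n, GammaAt g (A n)) →
    ∃ B : ℕ → Set (Cp X), (∀ n, B n ⊆ A n ∧ (B n).Finite) ∧ WGammaAt g (⋃ n, B n)

/-- The selection principle `S_fin(Γ_F, Ω^gr)` for a space `X`. -/
def SfinGammaFOmegaGr (X : Type*) [TopologicalSpace X] : Prop :=
  ∀ 𝒰 : ℕ → Set (Set X), (∀ n, GammaFShrinkable (𝒰 n)) →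
    ∃ 𝒱 : ℕ → Set (Set X), (∀ n, 𝒱 n ⊆ 𝒰 n ∧ (𝒱 n).Finite) ∧
      OmegaGroupable (⋃ n, 𝒱 n)
/-- `X` is projectively Hurewicz iff for every continuous
`f : X → ℝ^ω` the image `f(X)` is Hurewicz. -/
lemma hurewicz_of_continuous_surjective {Z Y : Type*} [TopologicalSpace Z] [TopologicalSpace Y]
    (h : Z → Y) (hc : Continuous h) (hs : Function.Surjective h) (hZ : Hurewicz Z) :
    Hurewicz Y := by
  intro 𝒰 h𝒰
  have hinj : Function.Injective (fun V : Set Y => h ⁻¹' V) :=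
    Set.preimage_injective.mpr hs
  set 𝒰' : ℕ → Set (Set Z) := fun n => (fun V : Set Y => h ⁻¹' V) '' (𝒰 n) with h𝒰'def
  have h𝒰' : ∀ n, (∀ V ∈ 𝒰' n, IsOpen V) ∧ ⋃₀ 𝒰' n = Set.univ := by
    intro n
    constructor
    · rintro W ⟨V, hV, rfl⟩
      exact ((h𝒰 n).1 V hV).preimage hc
    · rw [Set.sUnion_image, ← Set.preimage_iUnion₂]
      have : ⋃ V ∈ 𝒰 n, V = Set.univ := by
        rw [← Set.sUnion_eq_biUnion]; exact (h𝒰 n).2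
      rw [this, Set.preimage_univ]
  obtain ⟨𝒱', h𝒱'1, h𝒱'2⟩ := hZ 𝒰' h𝒰'
  refine ⟨fun n => {V ∈ 𝒰 n | h ⁻¹' V ∈ 𝒱' n}, fun n => ?_, fun y => ?_⟩
  · refine ⟨fun V hV => hV.1, ?_⟩
    have : {V ∈ 𝒰 n | h ⁻¹' V ∈ 𝒱' n} ⊆ (fun V : Set Y => h ⁻¹' V) ⁻¹' (𝒱' n) :=
      fun V hV => hV.2
    exact (((h𝒱'1 n).2).preimage hinj.injOn).subset this
  · obtain ⟨x, rfl⟩ := hs y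
    filter_upwards [h𝒱'2 x] with n hn
    obtain ⟨W, hW, hxW⟩ := hn
    obtain ⟨V, hV, rfl⟩ := (h𝒱'1 n).1 hW
    exact ⟨V, ⟨hV, hW⟩, hxW⟩

theorem projHurewicz_iff_image_Romega_Hurewicz (X : Type*) [TopologicalSpace X] [T35Space X] :
    ProjHurewicz X ↔
      ∀ f : X → (ℕ → ℝ), Continuous f → Hurewicz (Set.range f) := by
  constructor
  · intro hPH f hf
    exact hPH (Set.range f) inferInstance inferInstance
      (Set.rangeFactorization f) (hf.codRestrict _) Set.rangeFactorization_surjective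
  · intro himg Y _ hmet hsep f hf hfs
    -- Y is a nonempty-or-empty separable metrizable space
    by_cases hY : Nonempty Y
    swap
    · intro 𝒰 _
      exact ⟨fun _ => ∅, fun n => ⟨Set.empty_subset _, Set.finite_empty⟩,
        fun y => absurd ⟨y⟩ hY⟩
    letI : MetricSpace Y := TopologicalSpace.metrizableSpaceMetric Y
    -- dense sequence
    obtain ⟨x, hx⟩ : ∃ x : ℕ → Y, DenseRange x := ⟨_, TopologicalSpace.denseRange_denseSeq Y⟩
    set e : Y → (ℕ → ℝ) := fun y n => dist y (x n) with he
    have hecont : Continuous e := by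
      apply continuous_pi
      intro n
      exact Continuous.dist continuous_id continuous_const
    have hind : IsInducing e := by
      rw [isInducing_iff_nhds]
      intro y
      refine le_antisymm (hecont.tendsto y).le_comap ?_
      rw [(Metric.nhds_basis_ball (x := y)).ge_iff]
      intro ε hε
      obtain ⟨n, hn⟩ : ∃ n, dist y (x n) < ε / 3 := by
        have := Metric.denseRange_iff.mp hx y (ε / 3) (by linarith)
        exact this
      refine Filter.mem_comap.mpr ⟨(fun u : ℕ → ℝ => u n) ⁻¹' Metric.ball (e y n) (ε / 3),
        ?_, ?_⟩
      · exact (continuous_apply n).continuousAt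
          (Metric.ball_mem_nhds _ (by linarith))
      · intro z hz
        simp only [Set.mem_preimage, Metric.mem_ball, Real.dist_eq, he] at hz
        have h1 : dist z (x n) < dist y (x n) + ε / 3 := by
          have := abs_lt.mp hz
          linarith [this.1, this.2]
        calc dist z y ≤ dist z (x n) + dist (x n) y := dist_triangle _ _ _
          _ < (dist y (x n) + ε / 3) + dist (x n) y := by linarith
          _ = dist y (x n) + ε / 3 + dist y (x n) := by rw [dist_comm (x n) y]
          _ < ε := by linarith
    have hemb : IsEmbedding e := ⟨hind, fun a b hab => by
      have : dist a b = 0 := by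
        by_contra hne
        have hd : 0 < dist a b := lt_of_le_of_ne dist_nonneg (Ne.symm hne)
        obtain ⟨n, hn⟩ := Metric.denseRange_iff.mp hx a (dist a b / 2) (by linarith)
        have h1 : e a n = e b n := congrFun hab n
        simp only [he] at h1
        have h2 : dist a b ≤ dist a (x n) + dist (x n) b := dist_triangle _ _ _
        rw [dist_comm (x n) b, ← h1] at h2
        linarith
      exact dist_eq_zero.mp this⟩
    -- the composed map
    have hH : Hurewicz (Set.range (e ∘ f)) := himg (e ∘ f) (hecont.comp hf)
    have hrange : Set.range (e ∘ f) = Set.range e := by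
      rw [Set.range_comp, Set.range_eq_univ.mpr hfs, Set.image_univ]
    rw [hrange] at hH
    -- transfer along the homeomorphism (range e) ≃ₜ Y
    have hhomeo := Topology.IsEmbedding.toHomeomorph hemb
    exact hurewicz_of_continuous_surjective hhomeo.symm hhomeo.symm.continuous
      hhomeo.symm.surjective hH
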